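/- For every real δ with 0 < δ < 1/8, ∫_{δ}^{1/2} ∫_{1/2}^{1−δ} 1/(t·s + (1−t)·(1−s)) dμ(t) dμ(s) ≥ (1/π²)·ln(1/(8δ)), where dμ(t) = dt/(π·√(t·(1−t))). -/

import Mathlib

open MeasureTheory Real Set intervalIntegral


lemma int_inv_sqrt {a b : ℝ} (ha : 0 < a) (hab : a ≤ b) :
    ∫ t in a..b, (Real.sqrt t)⁻¹ = 2 * (Real.sqrt b - Real.sqrt a) := by
  have h : EqOn (fun t => (Real.sqrt t)⁻¹) (fun t : ℝ => t ^ (-(1/2) : ℝ)) (uIcc a b) := by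
    intro t ht
    rw [uIcc_of_le hab] at ht
    have ht0 : 0 ≤ t := le_trans ha.le ht.1
    simp only
    rw [Real.rpow_neg ht0, ← Real.sqrt_eq_rpow]
  rw [intervalIntegral.integral_congr h,
    integral_rpow (Or.inl (by norm_num : (-1:ℝ) < -(1/2)))]
  have : (-(1/2) : ℝ) + 1 = 1/2 := by norm_num
  rw [this, ← Real.sqrt_eq_rpow, ← Real.sqrt_eq_rpow]
  ring

lemma int_inv_sqrt3 {a b : ℝ} (ha : 0 < a) (hab : a ≤ b) :
    ∫ t in a..b, (Real.sqrt t)⁻¹ * t⁻¹ = 2 * ((Real.sqrt a)⁻¹ - (Real.sqrt b)⁻¹) := by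
  have h : EqOn (fun t => (Real.sqrt t)⁻¹ * t⁻¹) (fun t : ℝ => t ^ (-(3/2) : ℝ)) (uIcc a b) := by
    intro t ht
    rw [uIcc_of_le hab] at ht
    have ht0 : 0 < t := lt_of_lt_of_le ha ht.1
    simp only
    rw [show (-(3/2) : ℝ) = -(1/2) + -1 by norm_num, Real.rpow_add ht0,
      Real.rpow_neg ht0.le, ← Real.sqrt_eq_rpow, Real.rpow_neg_one]
  rw [intervalIntegral.integral_congr h,
    integral_rpow (Or.inr ⟨by norm_num, by rw [uIcc_of_le hab]; rintro ⟨h1, h2⟩; linarith⟩)]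
  have : (-(3/2) : ℝ) + 1 = -(1/2) := by norm_num
  rw [this]
  have ha' : (a : ℝ) ^ (-(1/2) : ℝ) = (Real.sqrt a)⁻¹ := by
    rw [Real.rpow_neg ha.le, ← Real.sqrt_eq_rpow]
  have hb' : (b : ℝ) ^ (-(1/2) : ℝ) = (Real.sqrt b)⁻¹ := by
    rw [Real.rpow_neg (ha.trans_le hab).le, ← Real.sqrt_eq_rpow]
  rw [ha', hb']
  ring


lemma cont_f {u : ℝ} (hu : 0 < u) {K : Set ℝ} (hK : ∀ t ∈ K, 0 < t) :
    ContinuousOn (fun t => (Real.sqrt t)⁻¹ * (2 * max t u)⁻¹) K := by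
  apply ContinuousOn.mul
  · exact ContinuousOn.inv₀ Real.continuous_sqrt.continuousOn
      (fun t ht => ne_of_gt (Real.sqrt_pos.2 (hK t ht)))
  · apply ContinuousOn.inv₀
    · exact (continuous_const.mul (continuous_id.max continuous_const)).continuousOn
    · intro t ht
      have := hK t ht
      have : 0 < max t u := lt_max_of_lt_right hu
      positivity

lemma inner_calc {δ u : ℝ} (hδ : 0 < δ) (h1 : δ ≤ u) (h2 : u ≤ 1/2) :
    ∫ t in Set.Icc δ (1/2 : ℝ), (Real.sqrt t)⁻¹ * (2 * max t u)⁻¹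
      = 2 * (Real.sqrt u)⁻¹ - Real.sqrt δ / u - Real.sqrt 2 := by
  have hu : 0 < u := lt_of_lt_of_le hδ h1
  rw [MeasureTheory.integral_Icc_eq_integral_Ioc,
    ← intervalIntegral.integral_of_le (by linarith : δ ≤ (1/2:ℝ))]
  have i1 : IntervalIntegrable (fun t => (Real.sqrt t)⁻¹ * (2 * max t u)⁻¹) volume δ u := by
    apply ContinuousOn.intervalIntegrable
    apply cont_f hu
    intro t ht; rw [uIcc_of_le h1] at ht; linarith [ht.1]
  have i2 : IntervalIntegrable (fun t => (Real.sqrt t)⁻¹ * (2 * max t u)⁻¹) volume u (1/2) := by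
    apply ContinuousOn.intervalIntegrable
    apply cont_f hu
    intro t ht; rw [uIcc_of_le h2] at ht; linarith [ht.1]
  rw [← intervalIntegral.integral_add_adjacent_intervals i1 i2]
  have e1 : ∫ t in δ..u, (Real.sqrt t)⁻¹ * (2 * max t u)⁻¹
      = ∫ t in δ..u, (Real.sqrt t)⁻¹ * (2 * u)⁻¹ := by
    apply intervalIntegral.integral_congr
    intro t ht
    rw [uIcc_of_le h1] at ht
    simp only [max_eq_right ht.2]
  have e2 : ∫ t in u..(1/2 : ℝ), (Real.sqrt t)⁻¹ * (2 * max t u)⁻¹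
      = ∫ t in u..(1/2 : ℝ), ((Real.sqrt t)⁻¹ * t⁻¹) * 2⁻¹ := by
    apply intervalIntegral.integral_congr
    intro t ht
    rw [uIcc_of_le h2] at ht
    simp only [max_eq_left ht.1]
    rw [mul_inv]
    ring
  rw [e1, e2, intervalIntegral.integral_mul_const, intervalIntegral.integral_mul_const,
    int_inv_sqrt hδ h1, int_inv_sqrt3 hu h2]
  have hus : Real.sqrt u * Real.sqrt u = u := Real.mul_self_sqrt hu.le
  have hus0 : Real.sqrt u ≠ 0 := ne_of_gt (Real.sqrt_pos.2 hu)
  have h12 : (Real.sqrt (1/2 : ℝ))⁻¹ = Real.sqrt 2 := by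
    rw [show (1/2 : ℝ) = 2⁻¹ by norm_num, Real.sqrt_inv, inv_inv]
  rw [h12]
  field_simp
  linear_combination (1) * hus


lemma outer_calc {δ : ℝ} (hδ : 0 < δ) (hδ' : δ < 1/8) :
    ∫ s in Set.Icc (1/2 : ℝ) (1 - δ),
        (Real.sqrt (1-s))⁻¹ * (2 * (Real.sqrt (1-s))⁻¹ - Real.sqrt δ / (1-s) - Real.sqrt 2)
      = 2 * Real.log (1/(2*δ)) - 4 + 4 * Real.sqrt 2 * Real.sqrt δ := by
  have hle : (1/2 : ℝ) ≤ 1 - δ := by linarith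
  rw [MeasureTheory.integral_Icc_eq_integral_Ioc,
    ← intervalIntegral.integral_of_le hle]
  have hcomp := intervalIntegral.integral_comp_sub_left
    (fun u => (Real.sqrt u)⁻¹ * (2 * (Real.sqrt u)⁻¹ - Real.sqrt δ / u - Real.sqrt 2)) 1
    (a := 1/2) (b := 1 - δ)
  rw [hcomp]
  have h1 : (1 : ℝ) - (1 - δ) = δ := by ring
  have h2 : (1 : ℝ) - 1/2 = 1/2 := by norm_num
  rw [h1, h2]
  -- now compute ∫ u in δ..1/2, (√u)⁻¹ * (2*(√u)⁻¹ - √δ/u - √2)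
  have hδ2 : δ ≤ (1/2 : ℝ) := by linarith
  have heq : EqOn (fun u => (Real.sqrt u)⁻¹ * (2 * (Real.sqrt u)⁻¹ - Real.sqrt δ / u - Real.sqrt 2))
      (fun u : ℝ => 2 * (1/u) - Real.sqrt δ * ((Real.sqrt u)⁻¹ * u⁻¹) - Real.sqrt 2 * (Real.sqrt u)⁻¹)
      (uIcc δ (1/2 : ℝ)) := by
    intro u hu
    rw [uIcc_of_le hδ2] at hu
    have hu0 : 0 < u := lt_of_lt_of_le hδ hu.1
    have hus : Real.sqrt u * Real.sqrt u = u := Real.mul_self_sqrt hu0.le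
    have hus0 : Real.sqrt u ≠ 0 := ne_of_gt (Real.sqrt_pos.2 hu0)
    simp only
    field_simp
    linear_combination (-2) * hus
  rw [intervalIntegral.integral_congr heq]
  have c1 : IntervalIntegrable (fun u : ℝ => 2 * (1/u)) volume δ (1/2) := by
    apply ContinuousOn.intervalIntegrable
    apply ContinuousOn.mul continuousOn_const
    apply ContinuousOn.div continuousOn_const continuousOn_id
    intro u hu; rw [uIcc_of_le hδ2] at hu; exact ne_of_gt (lt_of_lt_of_le hδ hu.1)
  have csq : ContinuousOn (fun u : ℝ => (Real.sqrt u)⁻¹) (uIcc δ (1/2)) := by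
    apply ContinuousOn.inv₀ Real.continuous_sqrt.continuousOn
    intro u hu; rw [uIcc_of_le hδ2] at hu
    exact ne_of_gt (Real.sqrt_pos.2 (lt_of_lt_of_le hδ hu.1))
  have c2 : IntervalIntegrable (fun u : ℝ => Real.sqrt δ * ((Real.sqrt u)⁻¹ * u⁻¹)) volume δ (1/2) := by
    apply ContinuousOn.intervalIntegrable
    apply ContinuousOn.mul continuousOn_const
    apply ContinuousOn.mul csq
    apply ContinuousOn.inv₀ continuousOn_id
    intro u hu; rw [uIcc_of_le hδ2] at hu; exact ne_of_gt (lt_of_lt_of_le hδ hu.1)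
  have c3 : IntervalIntegrable (fun u : ℝ => Real.sqrt 2 * (Real.sqrt u)⁻¹) volume δ (1/2) :=
    ContinuousOn.intervalIntegrable (ContinuousOn.mul continuousOn_const csq)
  rw [intervalIntegral.integral_sub (c1.sub c2) c3, intervalIntegral.integral_sub c1 c2,
    intervalIntegral.integral_const_mul, intervalIntegral.integral_const_mul,
    intervalIntegral.integral_const_mul,
    integral_one_div (by rw [uIcc_of_le hδ2]; rintro ⟨a, b⟩; linarith),
    int_inv_sqrt3 hδ hδ2, int_inv_sqrt hδ hδ2]
  have hδs : Real.sqrt δ * (Real.sqrt δ)⁻¹ = 1 := mul_inv_cancel₀ (ne_of_gt (Real.sqrt_pos.2 hδ))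
  have h2s : Real.sqrt 2 * (Real.sqrt 2)⁻¹ = 1 := mul_inv_cancel₀ (by positivity)
  have h12 : Real.sqrt (1/2 : ℝ) = (Real.sqrt 2)⁻¹ := by
    rw [show (1/2 : ℝ) = 2⁻¹ by norm_num, Real.sqrt_inv]
  have hlog : Real.log ((1/2 : ℝ)/δ) = Real.log (1/(2*δ)) := by
    congr 1; ring
  rw [h12, hlog]
  rw [inv_inv]
  linear_combination (-2)*hδs + (-2)*h2s


lemma pointwise_bd {δ s t : ℝ} (hδ : 0 < δ) (hδ' : δ < 1/8)
    (hs : s ∈ Set.Icc (1/2 : ℝ) (1 - δ)) (ht : t ∈ Set.Icc δ (1/2 : ℝ)) :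
    (1/Real.pi^2) * ((Real.sqrt (1-s))⁻¹ * ((Real.sqrt t)⁻¹ * (2 * max t (1-s))⁻¹))
      ≤ (1 / (t * s + (1 - t) * (1 - s)))
            * (1 / (Real.pi * Real.sqrt (t * (1 - t))))
            * (1 / (Real.pi * Real.sqrt (s * (1 - s)))) := by
  obtain ⟨hs1, hs2⟩ := hs
  obtain ⟨ht1, ht2⟩ := ht
  have ht0 : 0 < t := lt_of_lt_of_le hδ ht1
  have hu0 : 0 < 1 - s := by linarith
  have hpi : 0 < Real.pi := Real.pi_pos
  have hD : 0 < t * s + (1 - t) * (1 - s) := by nlinarith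
  have hDle : t * s + (1 - t) * (1 - s) ≤ 2 * max t (1 - s) := by
    have h1 : t * s ≤ t := by nlinarith
    have h2 : (1 - t) * (1 - s) ≤ 1 - s := by nlinarith
    have h3 : t ≤ max t (1 - s) := le_max_left _ _
    have h4 : 1 - s ≤ max t (1 - s) := le_max_right _ _
    linarith
  have htt : Real.sqrt (t * (1 - t)) ≤ Real.sqrt t := Real.sqrt_le_sqrt (by nlinarith)
  have hss : Real.sqrt (s * (1 - s)) ≤ Real.sqrt (1 - s) := Real.sqrt_le_sqrt (by nlinarith)
  have htt0 : 0 < Real.sqrt (t * (1 - t)) := Real.sqrt_pos.2 (by nlinarith)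
  have hss0 : 0 < Real.sqrt (s * (1 - s)) := Real.sqrt_pos.2 (by nlinarith)
  have key : (1 / (2 * max t (1-s))) * (1 / (Real.pi * Real.sqrt t)) * (1 / (Real.pi * Real.sqrt (1-s)))
      ≤ (1 / (t * s + (1 - t) * (1 - s)))
            * (1 / (Real.pi * Real.sqrt (t * (1 - t))))
            * (1 / (Real.pi * Real.sqrt (s * (1 - s)))) := by
    gcongr 1/?_ * (1/?_) * (1/?_) <;>
      first
        | positivity
        | exact hDle
        | exact mul_le_mul_of_nonneg_left htt hpi.le
        | exact mul_le_mul_of_nonneg_left hss hpi.le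
  calc (1/Real.pi^2) * ((Real.sqrt (1-s))⁻¹ * ((Real.sqrt t)⁻¹ * (2 * max t (1-s))⁻¹))
      = (1 / (2 * max t (1-s))) * (1 / (Real.pi * Real.sqrt t)) * (1 / (Real.pi * Real.sqrt (1-s))) := by
        ring
    _ ≤ _ := key

lemma arith_bd {δ : ℝ} (hδ : 0 < δ) (hδ' : δ < 1/8) :
    Real.log (1/(8*δ)) ≤ 2 * Real.log (1/(2*δ)) - 4 + 4 * Real.sqrt 2 * Real.sqrt δ := by
  set x := Real.sqrt 2 * Real.sqrt δ with hxdef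
  have hx : 0 < x := by positivity
  have hxx : x * x = 2 * δ := by
    rw [hxdef, mul_mul_mul_comm, Real.mul_self_sqrt (by norm_num : (0:ℝ) ≤ 2),
      Real.mul_self_sqrt hδ.le]
  have hlog2x : Real.log 2 + Real.log x ≤ 2*x - 1 := by
    have := Real.log_le_sub_one_of_pos (show (0:ℝ) < 2*x by linarith)
    rwa [Real.log_mul (by norm_num) (ne_of_gt hx)] at this
  have hlogδ : Real.log δ = 2 * Real.log x - Real.log 2 := by
    have h2δ : Real.log (2*δ) = Real.log 2 + Real.log δ :=
      Real.log_mul (by norm_num) (ne_of_gt hδ)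
    have hxx' : Real.log (2*δ) = Real.log x + Real.log x := by
      rw [← hxx, Real.log_mul (ne_of_gt hx) (ne_of_gt hx)]
    linarith
  have l2 : (0.6931471803 : ℝ) < Real.log 2 := Real.log_two_gt_d9
  have e1 : Real.log (1/(8*δ)) = -(Real.log 8 + Real.log δ) := by
    rw [one_div, Real.log_inv, Real.log_mul (by norm_num) (ne_of_gt hδ)]
  have e2 : Real.log (1/(2*δ)) = -(Real.log 2 + Real.log δ) := by
    rw [one_div, Real.log_inv, Real.log_mul (by norm_num) (ne_of_gt hδ)]
  have e3 : Real.log 8 = 3 * Real.log 2 := by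
    rw [show (8:ℝ) = 2^3 by norm_num, Real.log_pow]
    norm_num
  rw [e1, e2, e3]
  linarith


-- continuity of the kernel integrand in t, for fixed s
lemma contF {δ s : ℝ} (hδ : 0 < δ) (hδ' : δ < 1/8) (hs : s ∈ Set.Icc (1/2 : ℝ) (1 - δ)) :
    ContinuousOn (fun t => (1 / (t * s + (1 - t) * (1 - s)))
            * (1 / (Real.pi * Real.sqrt (t * (1 - t))))
            * (1 / (Real.pi * Real.sqrt (s * (1 - s))))) (Set.Icc δ (1/2 : ℝ)) := by
  obtain ⟨hs1, hs2⟩ := hs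
  have hpi := Real.pi_pos
  apply ContinuousOn.mul
  apply ContinuousOn.mul
  · apply ContinuousOn.div continuousOn_const (by fun_prop)
    intro t ht
    obtain ⟨ht1, ht2⟩ := ht
    have : 0 < t := lt_of_lt_of_le hδ ht1
    nlinarith
  · apply ContinuousOn.div continuousOn_const (by fun_prop)
    intro t ht
    obtain ⟨ht1, ht2⟩ := ht
    have h0 : 0 < t := lt_of_lt_of_le hδ ht1
    have : 0 < Real.sqrt (t * (1-t)) := Real.sqrt_pos.2 (by nlinarith)
    positivity
  · exact continuousOn_const

lemma inner_bound {δ s : ℝ} (hδ : 0 < δ) (hδ' : δ < 1/8)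
    (hs : s ∈ Set.Icc (1/2 : ℝ) (1 - δ)) :
    (1/Real.pi^2) * ((Real.sqrt (1-s))⁻¹
        * (2 * (Real.sqrt (1-s))⁻¹ - Real.sqrt δ / (1-s) - Real.sqrt 2))
      ≤ ∫ t in Set.Icc δ (1/2 : ℝ),
          (1 / (t * s + (1 - t) * (1 - s)))
            * (1 / (Real.pi * Real.sqrt (t * (1 - t))))
            * (1 / (Real.pi * Real.sqrt (s * (1 - s)))) := by
  have hu1 : δ ≤ 1 - s := by linarith [hs.2]
  have hu2 : 1 - s ≤ 1/2 := by linarith [hs.1]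
  have hu0 : 0 < 1 - s := lt_of_lt_of_le hδ hu1
  have step1 : (1/Real.pi^2) * ((Real.sqrt (1-s))⁻¹
        * (2 * (Real.sqrt (1-s))⁻¹ - Real.sqrt δ / (1-s) - Real.sqrt 2))
      = ∫ t in Set.Icc δ (1/2 : ℝ),
          (1/Real.pi^2) * ((Real.sqrt (1-s))⁻¹ * ((Real.sqrt t)⁻¹ * (2 * max t (1-s))⁻¹)) := by
    have : (fun t => (1/Real.pi^2) * ((Real.sqrt (1-s))⁻¹ * ((Real.sqrt t)⁻¹ * (2 * max t (1-s))⁻¹)))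
        = fun t => ((1/Real.pi^2) * (Real.sqrt (1-s))⁻¹) * ((Real.sqrt t)⁻¹ * (2 * max t (1-s))⁻¹) := by
      funext t; ring
    rw [this, MeasureTheory.integral_const_mul, inner_calc hδ hu1 hu2]
    ring
  rw [step1]
  apply MeasureTheory.setIntegral_mono_on
  · -- integrability of lower fn
    apply ContinuousOn.integrableOn_compact isCompact_Icc
    apply ContinuousOn.mul continuousOn_const
    apply ContinuousOn.mul continuousOn_const
    apply ContinuousOn.mul
    · apply ContinuousOn.inv₀ Real.continuous_sqrt.continuousOn
      intro t ht
      exact ne_of_gt (Real.sqrt_pos.2 (lt_of_lt_of_le hδ ht.1))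
    · apply ContinuousOn.inv₀ (by fun_prop)
      intro t ht
      have h0 : 0 < t := lt_of_lt_of_le hδ ht.1
      have : 0 < max t (1-s) := lt_max_of_lt_left h0
      positivity
  · exact ContinuousOn.integrableOn_compact isCompact_Icc (contF hδ hδ' hs)
  · exact measurableSet_Icc
  · intro t ht
    exact pointwise_bd hδ hδ' hs ht

/-- Lower estimate: for `0 < δ < 1/8`,
`∫_{δ}^{1/2} ∫_{1/2}^{1−δ} 1/(ts+(1−t)(1−s)) dμ(t) dμ(s) ≥ (1/π²)·ln(1/(8δ))`,
where `dμ(t) = dt/(π√(t(1−t)))`. -/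
theorem kernel_double_integral_lower (δ : ℝ) (hδ : 0 < δ) (hδ' : δ < 1 / 8) :
    (1 / Real.pi ^ 2) * Real.log (1 / (8 * δ))
      ≤ ∫ s in Set.Icc (1 / 2 : ℝ) (1 - δ), ∫ t in Set.Icc δ (1 / 2 : ℝ),
          (1 / (t * s + (1 - t) * (1 - s)))
            * (1 / (Real.pi * Real.sqrt (t * (1 - t))))
            * (1 / (Real.pi * Real.sqrt (s * (1 - s)))) := by
  have hpi := Real.pi_pos
  set F : ℝ → ℝ → ℝ := fun s t =>
      (1 / (t * s + (1 - t) * (1 - s)))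
            * (1 / (Real.pi * Real.sqrt (t * (1 - t))))
            * (1 / (Real.pi * Real.sqrt (s * (1 - s)))) with hF
  -- measurability
  have measF : StronglyMeasurable (Function.uncurry F) := by
    apply Measurable.stronglyMeasurable
    unfold Function.uncurry
    fun_prop
  have hH_meas : StronglyMeasurable (fun s => ∫ t in Set.Icc δ (1/2 : ℝ), F s t) :=
    measF.integral_prod_right
  -- uniform bound on the rectangle
  set M : ℝ := (1 / (δ * (1/2))) * (1 / (Real.pi * Real.sqrt (δ * (1/2))))
      * (1 / (Real.pi * Real.sqrt (δ * (1/2)))) with hM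
  have hFbd : ∀ s ∈ Set.Icc (1/2 : ℝ) (1 - δ), ∀ t ∈ Set.Icc δ (1/2 : ℝ), ‖F s t‖ ≤ M := by
    intro s hs t ht
    obtain ⟨hs1, hs2⟩ := hs
    obtain ⟨ht1, ht2⟩ := ht
    have ht0 : 0 < t := lt_of_lt_of_le hδ ht1
    have hu0 : 0 < 1 - s := by linarith
    have hD : 0 < t * s + (1 - t) * (1 - s) := by nlinarith
    have htt0 : 0 < t * (1 - t) := by nlinarith
    have hss0 : 0 < s * (1 - s) := by nlinarith
    have hFpos : 0 ≤ F s t := by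
      rw [hF]
      have h1 : 0 < Real.sqrt (t * (1-t)) := Real.sqrt_pos.2 htt0
      have h2 : 0 < Real.sqrt (s * (1-s)) := Real.sqrt_pos.2 hss0
      positivity
    rw [Real.norm_eq_abs, abs_of_nonneg hFpos, hM]
    simp only [hF]
    gcongr 1/?_ * (1/?_) * (1/?_) <;>
      first
        | positivity
        | nlinarith
        | exact mul_le_mul_of_nonneg_left (Real.sqrt_le_sqrt (by nlinarith)) hpi.le
  -- integrability of inner integral in s
  have hHint : IntegrableOn (fun s => ∫ t in Set.Icc δ (1/2 : ℝ), F s t)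
      (Set.Icc (1/2 : ℝ) (1 - δ)) := by
    apply MeasureTheory.Integrable.mono'
      (g := fun _ => M * (volume (Set.Icc δ (1/2 : ℝ))).toReal)
    · exact integrableOn_const measure_Icc_lt_top.ne
    · exact hH_meas.aestronglyMeasurable.restrict
    · rw [ae_restrict_iff' measurableSet_Icc]
      filter_upwards with s hs
      apply norm_setIntegral_le_of_norm_le_const measure_Icc_lt_top (hFbd s hs)
  -- lower function integrable
  have hhint : IntegrableOn (fun s => (1/Real.pi^2) * ((Real.sqrt (1-s))⁻¹
        * (2 * (Real.sqrt (1-s))⁻¹ - Real.sqrt δ / (1-s) - Real.sqrt 2)))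
      (Set.Icc (1/2 : ℝ) (1 - δ)) := by
    apply ContinuousOn.integrableOn_compact isCompact_Icc
    apply ContinuousOn.mul continuousOn_const
    have hsub : ContinuousOn (fun s : ℝ => (Real.sqrt (1 - s))⁻¹) (Set.Icc (1/2 : ℝ) (1 - δ)) := by
      apply ContinuousOn.inv₀ (by fun_prop)
      intro s hs
      have : 0 < 1 - s := by linarith [hs.2, hδ']
      exact ne_of_gt (Real.sqrt_pos.2 this)
    apply ContinuousOn.mul hsub
    apply ContinuousOn.sub
    apply ContinuousOn.sub (ContinuousOn.mul continuousOn_const hsub)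
    · apply ContinuousOn.div continuousOn_const (by fun_prop)
      intro s hs
      have : 0 < 1 - s := by linarith [hs.2, hδ']
      linarith
    · exact continuousOn_const
  calc (1 / Real.pi ^ 2) * Real.log (1 / (8 * δ))
      ≤ (1 / Real.pi ^ 2) * (2 * Real.log (1/(2*δ)) - 4 + 4 * Real.sqrt 2 * Real.sqrt δ) := by
        apply mul_le_mul_of_nonneg_left (arith_bd hδ hδ') (by positivity)
    _ = ∫ s in Set.Icc (1/2 : ℝ) (1 - δ), (1/Real.pi^2) * ((Real.sqrt (1-s))⁻¹
          * (2 * (Real.sqrt (1-s))⁻¹ - Real.sqrt δ / (1-s) - Real.sqrt 2)) := by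
        rw [MeasureTheory.integral_const_mul, outer_calc hδ hδ']
    _ ≤ ∫ s in Set.Icc (1/2 : ℝ) (1 - δ), ∫ t in Set.Icc δ (1/2 : ℝ), F s t := by
        apply MeasureTheory.setIntegral_mono_on hhint hHint measurableSet_Icc
        intro s hs
        exact inner_bound hδ hδ' hs
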